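/- Let ψ_t denote the prediction operator of a one-dimensional CIR diffusion with generator (1/2)(α − βz) d/dz + (z/2) d²/dz², stationary with respect to Ga(α, β). Then for m ∈ Z_+ and s ≥ 0, ψ_t(Ga(α+m, β+s)) = Σ_{j=0}^m Bin(m−j; m, p(t)) Ga(α+m−j, β+S_t), where S_t = βs/((β+s)e^{βt/2} − s) and p(t) = S_t/s, i.e., the time-t distribution of the CIR process started from a Ga(α+m, β+s) initial law is the stated finite mixture of gamma distributions. -/

import Mathlib

open Real MeasureTheory ProbabilityTheory

/-- The deterministic dual process `S_t = βs/((β+s)e^{βt/2} - s)`. -/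
noncomputable def Ssol (β s t : ℝ) : ℝ :=
  β * s / ((β + s) * Real.exp (β * t / 2) - s)

/-- Binomial pmf `Bin(r; n, p)`. -/
noncomputable def binPMF (r n : ℕ) (p : ℝ) : ℝ :=
  (n.choose r : ℝ) * p ^ r * (1 - p) ^ (n - r)

/-- The CIR transition function
`P_t(z,·) = Σ_k Po(k; zβ/(e^{βt/2}-1)) Ga(α+k, β+β/(e^{βt/2}-1))`. -/
noncomputable def cirKernel (α β t z : ℝ) : Measure ℝ :=
  Measure.sum fun k : ℕ =>
    ENNReal.ofReal
        (poissonPMFReal (Real.toNNReal (z * β / (Real.exp (β * t / 2) - 1))) k) •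
      gammaMeasure (α + k) (β + β / (Real.exp (β * t / 2) - 1))

open Finset
open scoped ENNReal NNReal

lemma kd_rec (k j : ℕ) :
    (k : ℝ) * (k.descFactorial j : ℝ)
      = (k.descFactorial (j+1) : ℝ) + j * (k.descFactorial j : ℝ) := by
  rcases le_or_gt j k with h | h
  · rw [Nat.descFactorial_succ]
    push_cast [Nat.cast_sub h]
    ring
  · rw [Nat.descFactorial_eq_zero_iff_lt.2 h,
      Nat.descFactorial_eq_zero_iff_lt.2 (h.trans (Nat.lt_succ_self j))]
    simp

lemma choose_real_ident (m j : ℕ) (hj1 : 1 ≤ j) (hjm : j ≤ m) (a : ℝ) :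
    ((m+1).choose j : ℝ) * (a + m)
      = (m.choose j : ℝ) * (a + m + j) + (m.choose (j-1) : ℝ) * (a + (j-1)) := by
  have pas : ((m+1).choose j : ℝ) = (m.choose j : ℝ) + (m.choose (j-1) : ℝ) := by
    rcases Nat.exists_eq_add_of_le hj1 with ⟨j', rfl⟩
    rw [add_comm 1 j']
    push_cast [Nat.choose_succ_succ]
    simp [Nat.add_sub_cancel]
    ring
  have idt : (m.choose j : ℝ) * j = (m.choose (j-1) : ℝ) * ((m:ℝ) - j + 1) := by
    rcases Nat.exists_eq_add_of_le hj1 with ⟨j', rfl⟩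
    have h1 := Nat.choose_succ_right_eq m j'
    have h2 : (1 + j') - 1 = j' := by omega
    have h3 : (m : ℝ) - (1 + j' : ℕ) + 1 = ((m - j' : ℕ) : ℝ) := by
      have hj'm : j' ≤ m := by omega
      push_cast [Nat.cast_sub hj'm]; ring
    rw [h2, h3, add_comm 1 j']
    exact_mod_cast congrArg (Nat.cast : ℕ → ℝ) h1
  have hc : ((j:ℝ) - 1) = ((j - 1 : ℕ) : ℝ) := by
    rcases Nat.exists_eq_add_of_le hj1 with ⟨j', rfl⟩
    push_cast [Nat.add_sub_cancel]
    simp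
  linear_combination (a + m) * pas - idt

lemma desc_expand (a : ℝ) (k : ℕ) : ∀ m : ℕ,
    ∏ i ∈ range m, (a + k + i)
      = ∑ j ∈ range (m+1), (m.choose j : ℝ) * (∏ i ∈ Ico j m, (a + i))
          * (k.descFactorial j : ℝ) := by
  intro m
  induction m with
  | zero => simp
  | succ m IH =>
    rw [prod_range_succ, IH, sum_mul]
    have step : ∀ j ∈ range (m+1),
        (m.choose j : ℝ) * (∏ i ∈ Ico j m, (a + i)) * (k.descFactorial j : ℝ)
            * (a + k + m)
          = ((m.choose j : ℝ) * (∏ i ∈ Ico j m, (a + i)) * ((a:ℝ) + m + j)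
              * (k.descFactorial j : ℝ))
            + ((m.choose j : ℝ) * (∏ i ∈ Ico j m, (a + i))
              * (k.descFactorial (j+1) : ℝ)) := by
      intro j _
      have h := kd_rec k j
      linear_combination ((m.choose j : ℝ) * ∏ i ∈ Ico j m, (a + (i:ℝ))) * h
    rw [sum_congr rfl step, sum_add_distrib]
    -- names
    set A : ℕ → ℝ := fun j => (m.choose j : ℝ) * (∏ i ∈ Ico j m, (a + i)) * ((a:ℝ) + m + j)
        * (k.descFactorial j : ℝ) with hA
    set G : ℕ → ℝ := fun j => if j = 0 then 0 else
        (m.choose (j-1) : ℝ) * (∏ i ∈ Ico (j-1) m, (a + i)) * (k.descFactorial j : ℝ) with hG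
    have hBG : ∑ j ∈ range (m+1),
        (m.choose j : ℝ) * (∏ i ∈ Ico j m, (a + i)) * (k.descFactorial (j+1) : ℝ)
        = ∑ j ∈ range (m+2), G j := by
      rw [sum_range_succ' G (m+1)]
      simp only [hG, if_pos rfl, add_zero, Nat.add_sub_cancel, if_neg (Nat.succ_ne_zero _)]
    have hAext : ∑ j ∈ range (m+1), A j = ∑ j ∈ range (m+2), A j := by
      have h0 : A (m+1) = 0 := by
        simp [hA, Nat.choose_succ_self]
      rw [sum_range_succ A (m+1), h0, add_zero]
    rw [hBG, hAext, ← sum_add_distrib]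
    refine sum_congr rfl fun j hj => ?_
    have hjm : j ≤ m + 1 := by simp at hj; omega
    rcases Nat.eq_zero_or_pos j with rfl | hj1
    · simp only [hA, hG, if_pos rfl, add_zero]
      rw [Finset.prod_Ico_succ_top (a := 0) (b := m) (Nat.zero_le _)]
      simp
    · rcases eq_or_lt_of_le hjm with rfl | hlt
      · -- j = m+1
        simp [hA, hG, Nat.choose_succ_self, Nat.add_sub_cancel, Nat.choose_self,
          Finset.Ico_self, Nat.pos_iff_ne_zero.mp hj1]
      · have hjm' : j ≤ m := by omega
        rw [Finset.prod_Ico_succ_top (a := j) (b := m) hjm']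
        simp only [hA, hG, if_neg (Nat.pos_iff_ne_zero.mp hj1)]
        have hsplit : (∏ i ∈ Ico (j-1) m, (a + i)) = (a + ((j:ℝ)-1)) * ∏ i ∈ Ico j m, (a + i) := by
          have h1 : j - 1 < m := by omega
          rw [Finset.prod_eq_prod_Ico_succ_bot h1]
          have : j - 1 + 1 = j := by omega
          rw [this]
          congr 1
          have : ((j-1 : ℕ) : ℝ) = (j:ℝ) - 1 := by
            push_cast [Nat.cast_sub hj1]; ring
          rw [this]
        rw [hsplit]
        have hci := choose_real_ident m j hj1 hjm' a
        linear_combination (-((∏ i ∈ Ico j m, (a + (i:ℝ))) * (k.descFactorial j : ℝ))) * hci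

lemma tsum_descFactorial_mul (y : ℝ) (hy : 0 ≤ y) (j : ℕ) :
    ∑' k : ℕ, ENNReal.ofReal ((k.descFactorial j : ℝ) * y ^ k / k.factorial)
      = ENNReal.ofReal (y ^ j * Real.exp y) := by
  set f : ℕ → ℝ≥0∞ := fun k => ENNReal.ofReal ((k.descFactorial j : ℝ) * y ^ k / k.factorial)
    with hf
  have hshift : ∑' n : ℕ, f (n + j) = ∑' k : ℕ, f k := by
    apply Function.Injective.tsum_eq (add_left_injective j)
    intro k hk
    rcases le_or_gt j k with h | h
    · exact ⟨k - j, by simp; omega⟩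
    · exfalso
      apply hk
      simp [hf, Nat.descFactorial_eq_zero_iff_lt.2 h]
  rw [← hshift]
  have hterm : ∀ n : ℕ, f (n + j) = ENNReal.ofReal (y ^ j) * ENNReal.ofReal (y ^ n / n.factorial) := by
    intro n
    have hd : ((n + j).descFactorial j : ℝ) * (n.factorial : ℝ) = ((n + j).factorial : ℝ) := by
      have := Nat.factorial_mul_descFactorial (Nat.le_add_left j n)
      have h2 : n + j - j = n := by omega
      rw [h2] at this
      exact_mod_cast congrArg (Nat.cast : ℕ → ℝ) (by rw [mul_comm] at this; exact this)
    rw [hf, ← ENNReal.ofReal_mul (by positivity)]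
    congr 1
    have hn : (n.factorial : ℝ) ≠ 0 := by positivity
    have hnj : ((n+j).factorial : ℝ) ≠ 0 := by positivity
    field_simp
    rw [pow_add]
    congr 1
    field_simp
    linear_combination (y ^ n * y ^ j) * hd
  rw [tsum_congr hterm, ENNReal.tsum_mul_left]
  rw [← ENNReal.ofReal_tsum_of_nonneg (fun n => by positivity) (Real.summable_pow_div_factorial y)]
  rw [← ENNReal.ofReal_mul (by positivity)]
  congr 1
  have : Real.exp y = ∑' n : ℕ, y ^ n / n.factorial := by
    rw [Real.exp_eq_exp_ℝ, NormedSpace.exp_eq_tsum_div]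
  rw [this]

lemma Gamma_add_nat (x : ℝ) (hx : 0 < x) (m : ℕ) :
    Real.Gamma (x + m) = (∏ i ∈ range m, (x + i)) * Real.Gamma x := by
  induction m with
  | zero => simp
  | succ m IH =>
    have hxm : x + m ≠ 0 := by positivity
    have : x + ((m : ℝ) + 1) = (x + m) + 1 := by ring
    rw [show ((m+1 : ℕ) : ℝ) = (m : ℝ) + 1 by push_cast; ring, this, Real.Gamma_add_one hxm, IH,
      prod_range_succ]
    ring

lemma measurable_po (c : ℝ) (k : ℕ) :
    Measurable fun z : ℝ => ENNReal.ofReal (poissonPMFReal (Real.toNNReal (z * c)) k) := by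
  apply ENNReal.measurable_ofReal.comp
  unfold poissonPMFReal
  have h : Measurable fun z : ℝ => ((Real.toNNReal (z * c) : ℝ≥0) : ℝ) :=
    NNReal.continuous_coe.measurable.comp (measurable_real_toNNReal.comp (measurable_mul_const c))
  fun_prop

lemma po_gamma_pointwise (A B c : ℝ) (hA : 0 < A) (hB : 0 < B) (hc : 0 < c) (k : ℕ) (z : ℝ)
    (hz : z ≠ 0) :
    gammaPDF A B z * ENNReal.ofReal (poissonPMFReal (Real.toNNReal (z * c)) k)
      = ENNReal.ofReal (B ^ A * c ^ k * Real.Gamma (A + k) /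
          (Real.Gamma A * k.factorial * (B + c) ^ (A + (k:ℝ))))
        * gammaPDF (A + k) (B + c) z := by
  rcases lt_or_gt_of_ne hz with hneg | hpos
  · rw [gammaPDF_of_neg hneg, gammaPDF_of_neg hneg]
    simp
  · rw [gammaPDF_of_nonneg hpos.le, gammaPDF_of_nonneg hpos.le]
    rw [← ENNReal.ofReal_mul (by positivity), ← ENNReal.ofReal_mul (by positivity)]
    congr 1
    have hzc : 0 ≤ z * c := by positivity
    have hco : ((Real.toNNReal (z * c) : ℝ≥0) : ℝ) = z * c := Real.coe_toNNReal _ hzc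
    unfold poissonPMFReal
    rw [hco]
    have h1 : z ^ (A + (k:ℝ) - 1) = z ^ (A - 1) * z ^ k := by
      rw [show A + (k:ℝ) - 1 = (A - 1) + (k:ℝ) by ring, Real.rpow_add hpos, Real.rpow_natCast]
    have h2 : Real.exp (-((B + c) * z)) = Real.exp (-(B * z)) * Real.exp (-(z * c)) := by
      rw [← Real.exp_add]; ring_nf
    have h3 : Real.Gamma (A + (k:ℝ)) ≠ 0 := (Real.Gamma_pos_of_pos (by positivity)).ne'
    have h4 : Real.Gamma A ≠ 0 := (Real.Gamma_pos_of_pos hA).ne'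
    have h5 : (k.factorial : ℝ) ≠ 0 := by positivity
    have h6 : (B + c) ^ (A + (k:ℝ)) ≠ 0 := (Real.rpow_pos_of_pos (by positivity) _).ne'
    rw [h1, h2, mul_pow]
    field_simp

lemma W_lintegral (A B c : ℝ) (hA : 0 < A) (hB : 0 < B) (hc : 0 < c) (k : ℕ) :
    ∫⁻ z, ENNReal.ofReal (poissonPMFReal (Real.toNNReal (z * c)) k) ∂(gammaMeasure A B)
      = ENNReal.ofReal (B ^ A * c ^ k * Real.Gamma (A + k) /
          (Real.Gamma A * k.factorial * (B + c) ^ (A + (k:ℝ)))) := by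
  have hmg : Measurable (gammaPDF A B) := ENNReal.measurable_ofReal.comp (measurable_gammaPDFReal A B)
  rw [show gammaMeasure A B = MeasureTheory.volume.withDensity (gammaPDF A B) from rfl,
    lintegral_withDensity_eq_lintegral_mul _ hmg (measurable_po c k)]
  have hae : ∀ᵐ z : ℝ, gammaPDF A B z * ENNReal.ofReal (poissonPMFReal (Real.toNNReal (z * c)) k)
      = ENNReal.ofReal (B ^ A * c ^ k * Real.Gamma (A + k) /
          (Real.Gamma A * k.factorial * (B + c) ^ (A + (k:ℝ))))
        * gammaPDF (A + k) (B + c) z := by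
    filter_upwards [compl_mem_ae_iff.2 (volume_singleton (a := (0:ℝ)))] with z hz
    exact po_gamma_pointwise A B c hA hB hc k z hz
  calc ∫⁻ z, gammaPDF A B z * ENNReal.ofReal (poissonPMFReal (Real.toNNReal (z * c)) k)
      = ∫⁻ z, ENNReal.ofReal (B ^ A * c ^ k * Real.Gamma (A + k) /
          (Real.Gamma A * k.factorial * (B + c) ^ (A + (k:ℝ))))
        * gammaPDF (A + k) (B + c) z := lintegral_congr_ae hae
    _ = ENNReal.ofReal (B ^ A * c ^ k * Real.Gamma (A + k) /
          (Real.Gamma A * k.factorial * (B + c) ^ (A + (k:ℝ)))) := by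
        have hm2 : Measurable (gammaPDF (A + (k:ℝ)) (B + c)) :=
          ENNReal.measurable_ofReal.comp (measurable_gammaPDFReal _ _)
        rw [lintegral_const_mul _ hm2,
          lintegral_gammaPDF_eq_one (by positivity) (by positivity), mul_one]

lemma term_real (α β B c : ℝ) (hα : 0 < α) (hβ : 0 < β) (hB : 0 < B) (hc : 0 < c)
    (m j : ℕ) (hj : j ≤ m) (x : ℝ) (hx : 0 < x) :
    (B ^ (α+(m:ℝ)) * (β+c) ^ α * x ^ (α-1) * Real.exp (-((β+c)*x))
        / (Real.Gamma (α+(m:ℝ)) * (B+c) ^ (α+(m:ℝ))))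
      * (m.choose j : ℝ) * (∏ i ∈ Ico j m, (α+(i:ℝ)))
      * (c*(β+c)*x/(B+c)) ^ j * Real.exp (c*(β+c)*x/(B+c))
    = binPMF j m (c/(B+c)) * gammaPDFReal (α+(j:ℝ)) ((β+c)*B/(B+c)) x := by
  have hb' : 0 < β + c := by positivity
  have hBc : 0 < B + c := by positivity
  have hb'' : 0 < (β+c)*B/(B+c) := by positivity
  have hΓα : 0 < Real.Gamma α := Real.Gamma_pos_of_pos hα
  rw [binPMF, gammaPDFReal, if_pos hx.le]
  have h1p : 1 - c/(B+c) = B/(B+c) := by field_simp; ring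
  have hGA : Real.Gamma (α+(m:ℝ)) = (∏ i ∈ range m, (α+(i:ℝ))) * Real.Gamma α :=
    Gamma_add_nat α hα m
  have hGj : Real.Gamma (α+(j:ℝ)) = (∏ i ∈ range j, (α+(i:ℝ))) * Real.Gamma α :=
    Gamma_add_nat α hα j
  have hsplitP : (∏ i ∈ range m, (α+(i:ℝ)))
      = (∏ i ∈ range j, (α+(i:ℝ))) * ∏ i ∈ Ico j m, (α+(i:ℝ)) :=
    (prod_range_mul_prod_Ico _ hj).symm
  have hb''r : ((β+c)*B/(B+c)) ^ (α+(j:ℝ))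
      = ((β+c)^α * (β+c)^j) * (B^α * B^j) / ((B+c)^α * (B+c)^j) := by
    rw [Real.div_rpow (by positivity) hBc.le, Real.mul_rpow hb'.le hB.le,
      Real.rpow_add hb', Real.rpow_add hB, Real.rpow_add hBc, Real.rpow_natCast,
      Real.rpow_natCast, Real.rpow_natCast]
  have hBA : B ^ (α+(m:ℝ)) = B^α * B^m := by
    rw [Real.rpow_add hB, Real.rpow_natCast]
  have hBcA : (B+c) ^ (α+(m:ℝ)) = (B+c)^α * (B+c)^m := by
    rw [Real.rpow_add hBc, Real.rpow_natCast]
  have hxj : x ^ (α+(j:ℝ)-1) = x^(α-1) * x^j := by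
    rw [show α+(j:ℝ)-1 = (α-1) + (j:ℝ) by ring, Real.rpow_add hx, Real.rpow_natCast]
  have hexp : Real.exp (-((β+c)*x)) * Real.exp (c*(β+c)*x/(B+c))
      = Real.exp (-(((β+c)*B/(B+c))*x)) := by
    rw [← Real.exp_add]
    congr 1
    field_simp
    ring
  have hBm : B^m = B^(m-j)*B^j := by rw [← pow_add, Nat.sub_add_cancel hj]
  have hBcm : (B+c)^m = (B+c)^(m-j)*(B+c)^j := by rw [← pow_add, Nat.sub_add_cancel hj]
  have hPj : (0:ℝ) < ∏ i ∈ range j, (α+(i:ℝ)) := prod_pos fun i _ => by positivity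
  rw [h1p, hGA, hsplitP, hb''r, hBA, hBcA, hxj, hGj, div_pow, div_pow, mul_pow, mul_pow,
    div_pow, hBm, hBcm, ← hexp]
  have hne1 : Real.Gamma α ≠ 0 := hΓα.ne'
  have hne2 : (∏ i ∈ range j, (α+(i:ℝ))) ≠ 0 := hPj.ne'
  have hne3 : (B+c)^α ≠ 0 := (Real.rpow_pos_of_pos hBc α).ne'
  have hne4 : ((B+c):ℝ)^j ≠ 0 := by positivity
  have hne5 : ((B+c):ℝ)^(m-j) ≠ 0 := by positivity
  field_simp

lemma termL (α β B c : ℝ) (hα : 0 < α) (hβ : 0 < β) (hB : 0 < B) (hc : 0 < c)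
    (m k : ℕ) (x : ℝ) (hx : 0 < x) :
    (B ^ (α+(m:ℝ)) * c ^ k * Real.Gamma ((α+(m:ℝ)) + (k:ℝ)) /
        (Real.Gamma (α+(m:ℝ)) * k.factorial * (B + c) ^ ((α+(m:ℝ)) + (k:ℝ))))
      * gammaPDFReal (α+(k:ℝ)) (β+c) x
    = (B ^ (α+(m:ℝ)) * (β+c) ^ α * x ^ (α-1) * Real.exp (-((β+c)*x))
        / (Real.Gamma (α+(m:ℝ)) * (B+c) ^ (α+(m:ℝ))))
      * ((∏ i ∈ range m, (α+(k:ℝ)+(i:ℝ))) * ((c*(β+c)*x/(B+c)) ^ k / k.factorial)) := by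
  have hb' : 0 < β + c := by positivity
  have hBc : 0 < B + c := by positivity
  have hΓαk : 0 < Real.Gamma (α+(k:ℝ)) := Real.Gamma_pos_of_pos (by positivity)
  have hΓA : 0 < Real.Gamma (α+(m:ℝ)) := Real.Gamma_pos_of_pos (by positivity)
  have hGAk : Real.Gamma ((α+(m:ℝ)) + (k:ℝ))
      = (∏ i ∈ range m, (α+(k:ℝ)+(i:ℝ))) * Real.Gamma (α+(k:ℝ)) := by
    rw [show (α+(m:ℝ))+(k:ℝ) = (α+(k:ℝ))+(m:ℝ) by ring, Gamma_add_nat _ (by positivity) m]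
  rw [gammaPDFReal, if_pos hx.le, hGAk]
  have hb'k : (β+c) ^ (α+(k:ℝ)) = (β+c)^α * (β+c)^k := by
    rw [Real.rpow_add hb', Real.rpow_natCast]
  have hxk : x ^ (α+(k:ℝ)-1) = x^(α-1) * x^k := by
    rw [show α+(k:ℝ)-1 = (α-1)+(k:ℝ) by ring, Real.rpow_add hx, Real.rpow_natCast]
  have hBck : (B+c) ^ ((α+(m:ℝ))+(k:ℝ)) = (B+c)^(α+(m:ℝ)) * (B+c)^k := by
    rw [Real.rpow_add hBc, Real.rpow_natCast]
  rw [hb'k, hxk, hBck, div_pow, mul_pow, mul_pow]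
  have hne1 : Real.Gamma (α+(k:ℝ)) ≠ 0 := hΓαk.ne'
  have hne2 : Real.Gamma (α+(m:ℝ)) ≠ 0 := hΓA.ne'
  have hne3 : (k.factorial : ℝ) ≠ 0 := by positivity
  have hne4 : (B+c)^(α+(m:ℝ)) ≠ 0 := (Real.rpow_pos_of_pos hBc _).ne'
  have hne5 : ((B+c):ℝ)^k ≠ 0 := by positivity
  field_simp

lemma density_ident (α β B c : ℝ) (hα : 0 < α) (hβ : 0 < β) (hB : 0 < B) (hc : 0 < c)
    (m : ℕ) (x : ℝ) (hx : x ≠ 0) :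
    ∑' k : ℕ, ENNReal.ofReal (B ^ (α+(m:ℝ)) * c ^ k * Real.Gamma ((α+(m:ℝ)) + (k:ℝ)) /
        (Real.Gamma (α+(m:ℝ)) * k.factorial * (B + c) ^ ((α+(m:ℝ)) + (k:ℝ))))
      * gammaPDF (α + (k:ℝ)) (β + c) x
    = ∑ j ∈ range (m+1), ENNReal.ofReal (binPMF (m - j) m (c/(B+c)))
        * gammaPDF (α + (m:ℝ) - (j:ℝ)) ((β+c)*B/(B+c)) x := by
  rcases hx.lt_or_gt with hneg | hpos
  · simp [gammaPDF_of_neg hneg]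
  · have hb' : 0 < β + c := by positivity
    have hBc : 0 < B + c := by positivity
    have hΓA : 0 < Real.Gamma (α+(m:ℝ)) := Real.Gamma_pos_of_pos (by positivity)
    set T : ℝ := B ^ (α+(m:ℝ)) * (β+c) ^ α * x ^ (α-1) * Real.exp (-((β+c)*x))
        / (Real.Gamma (α+(m:ℝ)) * (B+c) ^ (α+(m:ℝ))) with hT
    set y : ℝ := c*(β+c)*x/(B+c) with hy
    have hT0 : 0 ≤ T := by
      rw [hT]
      have h1 : 0 < B ^ (α+(m:ℝ)) := Real.rpow_pos_of_pos hB _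
      have h2 : 0 < (β+c) ^ α := Real.rpow_pos_of_pos hb' _
      have h3 : 0 < x ^ (α-1) := Real.rpow_pos_of_pos hpos _
      have h4 : 0 < (B+c) ^ (α+(m:ℝ)) := Real.rpow_pos_of_pos hBc _
      positivity
    have hy0 : 0 ≤ y := by rw [hy]; positivity
    -- step 1: rewrite each tsum term
    have hstep1 : ∀ k : ℕ,
        ENNReal.ofReal (B ^ (α+(m:ℝ)) * c ^ k * Real.Gamma ((α+(m:ℝ)) + (k:ℝ)) /
          (Real.Gamma (α+(m:ℝ)) * k.factorial * (B + c) ^ ((α+(m:ℝ)) + (k:ℝ))))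
          * gammaPDF (α + (k:ℝ)) (β + c) x
        = ∑ j ∈ range (m+1), ENNReal.ofReal ((T * ((m.choose j : ℝ)
              * (∏ i ∈ Ico j m, (α+(i:ℝ))))) * ((k.descFactorial j : ℝ) * y ^ k / k.factorial)) := by
      intro k
      have hwnn : 0 ≤ B ^ (α+(m:ℝ)) * c ^ k * Real.Gamma ((α+(m:ℝ)) + (k:ℝ)) /
          (Real.Gamma (α+(m:ℝ)) * k.factorial * (B + c) ^ ((α+(m:ℝ)) + (k:ℝ))) := by
        have h1 : 0 < B ^ (α+(m:ℝ)) := Real.rpow_pos_of_pos hB _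
        have h2 : 0 < Real.Gamma ((α+(m:ℝ)) + (k:ℝ)) := Real.Gamma_pos_of_pos (by positivity)
        have h3 : 0 < (B+c) ^ ((α+(m:ℝ)) + (k:ℝ)) := Real.rpow_pos_of_pos hBc _
        positivity
      rw [gammaPDF, ← ENNReal.ofReal_mul hwnn, termL α β B c hα hβ hB hc m k x hpos,
        ← hT, ← hy, desc_expand α k m, ← ENNReal.ofReal_sum_of_nonneg]
      · congr 1
        rw [sum_mul, mul_sum]
        refine sum_congr rfl fun j _ => ?_
        ring
      · intro j _
        have hP : 0 ≤ ∏ i ∈ Ico j m, (α+(i:ℝ)) := le_of_lt (prod_pos fun i _ => by positivity)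
        have hd : (0:ℝ) ≤ (k.descFactorial j : ℝ) := Nat.cast_nonneg _
        have hyk : 0 ≤ y ^ k := by positivity
        have hkf : (0:ℝ) < k.factorial := by positivity
        positivity
    rw [tsum_congr hstep1, Summable.tsum_finsetSum (fun j _ => ENNReal.summable)]
    rw [← sum_range_reflect]
    refine sum_congr rfl fun j hj => ?_
    rw [mem_range] at hj
    have hjm : j ≤ m := by omega
    have h1 : m + 1 - 1 - j = m - j := by omega
    have h3 : α + (m:ℝ) - (j:ℝ) = α + ((m - j : ℕ):ℝ) := by
      push_cast [Nat.cast_sub hjm]; ring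
    rw [h1, h3]
    set n := m - j with hn
    have hjm' : n ≤ m := Nat.sub_le m j
    -- now: ∑' k, ofReal ((T*C*P) * (d_j * y^k/k!)) = ofReal (binPMF n m p) * gammaPDF (α+j) b'' x
    have hK : 0 ≤ T * ((m.choose n : ℝ) * (∏ i ∈ Ico n m, (α+(i:ℝ)))) := by
      have hP : 0 ≤ ∏ i ∈ Ico n m, (α+(i:ℝ)) := le_of_lt (prod_pos fun i _ => by positivity)
      positivity
    calc ∑' k : ℕ, ENNReal.ofReal ((T * ((m.choose n : ℝ) * (∏ i ∈ Ico n m, (α+(i:ℝ)))))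
            * ((k.descFactorial n : ℝ) * y ^ k / k.factorial))
        = ENNReal.ofReal (T * ((m.choose n : ℝ) * (∏ i ∈ Ico n m, (α+(i:ℝ)))))
            * ∑' k : ℕ, ENNReal.ofReal ((k.descFactorial n : ℝ) * y ^ k / k.factorial) := by
          rw [← ENNReal.tsum_mul_left]
          refine tsum_congr fun k => ?_
          rw [← ENNReal.ofReal_mul hK]
      _ = ENNReal.ofReal (binPMF n m (c/(B+c)))
            * gammaPDF (α + (n:ℝ)) ((β+c)*B/(B+c)) x := by
          rw [tsum_descFactorial_mul y hy0 n, ← ENNReal.ofReal_mul hK, gammaPDF]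
          have hbin : 0 ≤ binPMF n m (c/(B+c)) := by
            rw [binPMF]
            have h1p : 1 - c/(B+c) = B/(B+c) := by field_simp; ring
            rw [h1p]
            positivity
          rw [← ENNReal.ofReal_mul hbin]
          congr 1
          have hterm := term_real α β B c hα hβ hB hc m n hjm' x hpos
          rw [hT, hy]
          linear_combination hterm

/-- the time-`t` propagation of `Ga(α+m, β+s)` under the CIR
diffusion is the finite mixture
`Σ_{j=0}^m Bin(m-j; m, p(t)) Ga(α+m-j, β+S_t)`, where
`p(t) = β/((β+s)e^{βt/2}-s)` (equal to `S_t/S_0` when `s > 0`). -/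

theorem CIR_propagation (α β : ℝ) (hα : 0 < α) (hβ : 0 < β)
    (m : ℕ) (s : ℝ) (hs : 0 ≤ s) (t : ℝ) (ht : 0 < t) :
    (gammaMeasure (α + m) (β + s)).bind (cirKernel α β t)
      = ∑ j ∈ Finset.range (m + 1),
          ENNReal.ofReal
              (binPMF (m - j) m (β / ((β + s) * Real.exp (β * t / 2) - s))) •
            gammaMeasure (α + m - j) (β + Ssol β s t) := by
  have hE : 1 < Real.exp (β * t / 2) := Real.one_lt_exp_iff.2 (by positivity)
  have hE1 : (0:ℝ) < Real.exp (β * t / 2) - 1 := by linarith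
  set c : ℝ := β / (Real.exp (β * t / 2) - 1) with hc_def
  have hc : 0 < c := div_pos hβ hE1
  have hB : 0 < β + s := by linarith
  have hA : 0 < α + (m:ℝ) := by positivity
  have hBc : 0 < (β + s) + c := by linarith
  have hden : (β + s) * Real.exp (β * t / 2) - s = (Real.exp (β * t / 2) - 1) * ((β + s) + c) := by
    rw [hc_def]
    field_simp
    ring
  have hp : β / ((β + s) * Real.exp (β * t / 2) - s) = c / ((β + s) + c) := by
    rw [hden, hc_def, div_div]
  have hSsol : β + Ssol β s t = (β + c) * (β + s) / ((β + s) + c) := by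
    rw [Ssol, hden, hc_def]
    field_simp
    ring
  rw [hp, hSsol]
  have harg : ∀ z : ℝ, z * β / (Real.exp (β * t / 2) - 1) = z * c := by
    intro z; rw [hc_def]; ring
  -- measurability of the kernel
  have hker : Measurable (cirKernel α β t) := by
    apply Measure.measurable_of_measurable_coe
    intro u hu
    have : (fun z : ℝ => (cirKernel α β t z) u)
        = fun z : ℝ => ∑' k : ℕ, ENNReal.ofReal (poissonPMFReal (Real.toNNReal (z * c)) k)
            * gammaMeasure (α + k) (β + c) u := by
      funext z
      rw [cirKernel, Measure.sum_apply _ hu]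
      refine tsum_congr fun k => ?_
      rw [Measure.smul_apply, smul_eq_mul, harg z, ← hc_def]
    rw [this]
    exact Measurable.ennreal_tsum fun k => (measurable_po c k).mul_const _
  refine Measure.ext fun S hS => ?_
  rw [Measure.bind_apply hS hker.aemeasurable]
  have hkapp : ∀ z : ℝ, (cirKernel α β t z) S
      = ∑' k : ℕ, ENNReal.ofReal (poissonPMFReal (Real.toNNReal (z * c)) k)
          * gammaMeasure (α + k) (β + c) S := by
    intro z
    rw [cirKernel, Measure.sum_apply _ hS]
    refine tsum_congr fun k => ?_
    rw [Measure.smul_apply, smul_eq_mul, harg z, ← hc_def]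
  have hmpdf : ∀ (a r : ℝ), Measurable (gammaPDF a r) := fun a r =>
    ENNReal.measurable_ofReal.comp (measurable_gammaPDFReal a r)
  calc ∫⁻ z, (cirKernel α β t z) S ∂(gammaMeasure (α + ↑m) (β + s))
      = ∑' k : ℕ, ENNReal.ofReal ((β+s) ^ (α+(m:ℝ)) * c ^ k * Real.Gamma ((α+(m:ℝ)) + (k:ℝ)) /
            (Real.Gamma (α+(m:ℝ)) * k.factorial * ((β+s) + c) ^ ((α+(m:ℝ)) + (k:ℝ))))
          * gammaMeasure (α + (k:ℝ)) (β + c) S := by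
        rw [lintegral_congr hkapp,
          lintegral_tsum (fun k => ((measurable_po c k).mul_const _).aemeasurable)]
        refine tsum_congr fun k => ?_
        rw [lintegral_mul_const _ (measurable_po c k),
          W_lintegral (α + (m:ℝ)) (β+s) c hA hB hc k, mul_comm]
    _ = ∫⁻ x in S, ∑' k : ℕ, ENNReal.ofReal ((β+s) ^ (α+(m:ℝ)) * c ^ k * Real.Gamma ((α+(m:ℝ)) + (k:ℝ)) /
            (Real.Gamma (α+(m:ℝ)) * k.factorial * ((β+s) + c) ^ ((α+(m:ℝ)) + (k:ℝ))))
          * gammaPDF (α + (k:ℝ)) (β + c) x := by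
        rw [lintegral_tsum (fun k => ((hmpdf _ _).const_mul _).aemeasurable)]
        refine tsum_congr fun k => ?_
        rw [show gammaMeasure (α + (k:ℝ)) (β + c)
            = MeasureTheory.volume.withDensity (gammaPDF (α + (k:ℝ)) (β + c)) from rfl,
          withDensity_apply _ hS, lintegral_const_mul _ (hmpdf _ _)]
    _ = ∫⁻ x in S, ∑ j ∈ range (m+1), ENNReal.ofReal (binPMF (m - j) m (c/((β+s)+c)))
          * gammaPDF (α + (m:ℝ) - (j:ℝ)) ((β+c)*(β+s)/((β+s)+c)) x := by
        refine lintegral_congr_ae (ae_restrict_of_ae ?_)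
        filter_upwards [compl_mem_ae_iff.2 (volume_singleton (a := (0:ℝ)))] with x hx0
        exact density_ident α β (β+s) c hα hβ hB hc m x hx0
    _ = (∑ j ∈ Finset.range (m + 1),
          ENNReal.ofReal (binPMF (m - j) m (c / (β + s + c))) •
            gammaMeasure (α + ↑m - ↑j) ((β + c) * (β + s) / (β + s + c))) S := by
        rw [lintegral_finset_sum _ (fun j _ => (hmpdf _ _).const_mul _),
          Measure.finset_sum_apply]
        refine sum_congr rfl fun j _ => ?_
        rw [Measure.smul_apply, smul_eq_mul,
          show gammaMeasure (α + (m:ℝ) - (j:ℝ)) ((β+c)*(β+s)/((β+s)+c))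
            = MeasureTheory.volume.withDensity (gammaPDF (α + (m:ℝ) - (j:ℝ)) ((β+c)*(β+s)/((β+s)+c))) from rfl,
          withDensity_apply _ hS, lintegral_const_mul _ (hmpdf _ _)]
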